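/- Let ⊑ be the relation on ordinals defined by β ⊑ α if and only if there is an ordinal γ with γ > CB(β) such that α = β + ω^γ, where CB(β) denotes the last exponent in the Cantor normal form of β (the Cantor-Bendixson rank of β, with CB(0) = 0). Then for every ordinal α, the set {β : α ⊑ β} is well-ordered by ⊑ (i.e., ⊑ is an anti-tree ordering). -/

import Mathlib

open Ordinal

universe u

/-- Cantor–Bendixson rank: the last exponent of the Cantor normal form (`CB 0 = 0`). -/
noncomputable def CB (o : Ordinal) : Ordinal :=
  ((Ordinal.CNF Ordinal.omega0 o).getLast?).elim 0 Prod.fst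

/-- The last coefficient of the Cantor normal form. -/
noncomputable def lastCoeff (o : Ordinal) : Ordinal :=
  ((Ordinal.CNF Ordinal.omega0 o).getLast?).elim 0 Prod.snd

/-- The position of `o` in its fan: the last coefficient of the Cantor normal form,
with the convention `i(n) = n + 1` for natural numbers `n` (virtually omitting `0`). -/
noncomputable def placeInFan (o : Ordinal) : Ordinal :=
  if o < Ordinal.omega0 then o + 1 else lastCoeff o

/-- The anti-tree order: `treeOrd β α` iff `α = β + ω ^ γ` for some `γ > CB β`. -/
def treeOrd (β α : Ordinal) : Prop :=
  ∃ γ : Ordinal, CB β < γ ∧ α = β + Ordinal.omega0 ^ γ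

/-- The immediate `treeOrd`-successor of `β`. -/
noncomputable def treeSucc (β : Ordinal) : Ordinal :=
  β + Ordinal.omega0 ^ (CB β + 1)

/-- The set of immediate `treeOrd`-predecessors of `α`. -/
def subfan (α : Ordinal) : Set Ordinal := {γ | treeSucc γ = α}

/-- The fan of `β`: the set of immediate predecessors of the immediate successor of `β`. -/
def fan (β : Ordinal) : Set Ordinal := subfan (treeSucc β)

open Classical in
/-- The order type of a set of ordinals: the unique `δ` with `S ≃o Set.Iio δ` (0 if none). -/
noncomputable def otp (S : Set Ordinal.{u}) : Ordinal.{u} :=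
  if h : ∃ δ : Ordinal.{u}, Nonempty (S ≃o Set.Iio δ) then h.choose else 0

/-- The image of `α ∈ S` under the unique order-preserving bijection of `S` with `otp S`. -/
noncomputable def ordIndex (S : Set Ordinal) (α : Ordinal) : Ordinal :=
  otp {x | x ∈ S ∧ x < α}

/-- `I` is closed in the ordinal `δ` (with its order topology). -/
def closedIn (I : Set Ordinal) (δ : Ordinal) : Prop :=
  IsClosed {x : Set.Iio δ | (x : Ordinal) ∈ I}

/-- `X` is closed in its supremum. -/
def ClosedInSup (X : Set Ordinal) : Prop := closedIn X (sSup X)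

/-- `I` is a skeleton of the ordinal `δ`. -/
def IsSkelOrd (I : Set Ordinal) (δ : Ordinal) : Prop :=
  I ⊆ Set.Iio δ ∧ closedIn I δ ∧ otp I = δ ∧
    ∀ α ∈ I, ∀ β ∈ I, (treeOrd α β ↔ treeOrd (ordIndex I α) (ordIndex I β))

/-- `I` is a skeleton of the set `J`. -/
def IsSkelSet (I J : Set Ordinal) : Prop :=
  I ⊆ J ∧ IsSkelOrd (ordIndex J '' I) (otp J)

/-- `I` is an `n`-skeleton of the set `J`. -/
def IsNSkelSet (n : ℕ) (I J : Set Ordinal) : Prop :=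
  IsSkelSet I J ∧
    ∀ α ∈ J, (fan α ∩ I).Nonempty → placeInFan (ordIndex J α) ≤ (n : Ordinal) → α ∈ I

/-- A collection `(I i)_{i < γ}` of subsets of `δ` is fan preserving. -/
def FanPreserving (γ : Ordinal) (I : Ordinal → Set Ordinal) (δ : Ordinal) : Prop :=
  ∀ α ≤ γ, Order.IsSuccLimit α → ∀ β < δ, (∀ i < α, (fan β ∩ I i).Infinite) →
    (fan β ∩ ⋂ i ∈ Set.Iio α, I i).Infinite

/-- Sum of the first `i` terms `ω ^ γ` of a Cantor normal form list. -/
noncomputable def partialSum (l : List Ordinal) (i : ℕ) : Ordinal :=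
  ((l.take i).map fun γ => Ordinal.omega0 ^ γ).sum

/-- The `i`-th component `C_i` of the Cantor normal form decomposition (for `1 ≤ i`). -/
noncomputable def comp (l : List Ordinal) (i : ℕ) : Set Ordinal :=
  {β | partialSum l (i - 1) < β ∧ β ≤ partialSum l i}

/-- `subtree α` is `{α} ∪ {β : β ⊏ α}`. -/
def subtree (α : Ordinal) : Set Ordinal := insert α {β | treeOrd β α}

/-- `Tlevel α n` is the set of elements of CB rank `n` in the tree below `α`. -/
def Tlevel (α : Ordinal) (n : ℕ) : Set Ordinal := {β | β ∈ subtree α ∧ CB β = (n : Ordinal)}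

/-- `FpowAux k r j = F(ω^k)^r_{k-j}`, defined by downward recursion. -/
noncomputable def FpowAux (k r : ℕ) : ℕ → Set Ordinal
  | 0 => {Ordinal.omega0 ^ (k : Ordinal)}
  | j + 1 => {γ | treeSucc γ ∈ FpowAux k r j ∧ (r : Ordinal) < placeInFan γ}

/-- `F(ω^k)^r_n` (for `n ≤ k`). -/
noncomputable def Fpow (k r n : ℕ) : Set Ordinal := FpowAux k r (k - n)

/-- `F(α)^r_n`: the copy of `F(ω^k)^r_n` in the tree below `α`, where `k = CB α`. -/
noncomputable def Fgen (α : Ordinal) (r n : ℕ) : Set Ordinal :=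
  {β | β ∈ subtree α ∧ ∃ k : ℕ, (k : Ordinal) = CB α ∧ ordIndex (subtree α) β ∈ Fpow k r n}

/-- The collection of `r`-large subsets of `Tlevel α n`. -/
def LargeR (α : Ordinal) (r n : ℕ) : Set (Set Ordinal) :=
  {A | A ⊆ Tlevel α n ∧ Fgen α r n ⊆ A}

/-- The collection of large subsets of `Tlevel α n`. -/
def Large (α : Ordinal) (n : ℕ) : Set (Set Ordinal) := ⋃ r : ℕ, LargeR α r n

/-- The closed ordinal partition relation `β →_cl (α₀, α₁)²`. -/
def ClRamseyProp (β α₀ α₁ : Ordinal) : Prop :=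
  ∀ c : Ordinal → Ordinal → Fin 2,
    ∃ i : Fin 2, ∃ X : Set Ordinal, X ⊆ Set.Iio β ∧
      otp X = (if i = 0 then α₀ else α₁) ∧ ClosedInSup X ∧
      ∀ x ∈ X, ∀ y ∈ X, x < y → c x y = i


lemma CB_opow (γ : Ordinal) : CB (omega0 ^ γ) = γ := by
  unfold CB
  rw [Ordinal.CNF.ne_zero (opow_ne_zero _ omega0_ne_zero), log_opow one_lt_omega0,
    Ordinal.mod_self, Ordinal.CNF.zero_right]
  simp

lemma CB_add_opow (β γ : Ordinal) : CB (β + omega0 ^ γ) = γ := by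
  induction β using Ordinal.induction with
  | h β IH =>
  by_cases h : β < omega0 ^ γ
  · rw [add_omega0_opow h, CB_opow]
  push_neg at h
  have hβ0 : β ≠ 0 := fun e => by simp [e, (opow_pos γ omega0_pos).not_ge] at h
  set L := log omega0 β with hL
  have hγL : γ ≤ L := (opow_le_iff_le_log one_lt_omega0 hβ0).1 h
  have hωL : (omega0 : Ordinal) ^ L ≠ 0 := opow_ne_zero _ omega0_ne_zero
  set q := β / omega0 ^ L with hq
  set r := β % omega0 ^ L with hr
  have hdm : omega0 ^ L * q + r = β := Ordinal.div_add_mod _ _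
  have hrlt : r < omega0 ^ L := Ordinal.mod_lt _ hωL
  have hq0 : q ≠ 0 := by
    rw [hq, ← pos_iff_ne_zero, Ordinal.div_pos hωL]
    exact opow_log_le_self _ hβ0
  have hqω : q < omega0 := div_opow_log_lt β one_lt_omega0
  rcases eq_or_lt_of_le hγL with hEq | hlt
  · -- γ = L
    rw [hEq]
    have hrw : β + omega0 ^ L = omega0 ^ L * (q + 1) := by
      rw [← hdm, add_assoc, add_omega0_opow hrlt, mul_add_one]
    rw [hrw]
    unfold CB
    have hne : omega0 ^ L * (q + 1) ≠ 0 :=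
      _root_.mul_ne_zero hωL (Order.succ_ne_bot q)
    have hq1ω : q + 1 < omega0 := by
      simpa [Order.succ] using isSuccLimit_omega0.succ_lt hqω
    have hlog : log omega0 (omega0 ^ L * (q + 1)) = L := by
      have := log_opow_mul_add one_lt_omega0 (v := q + 1) (u := L) (w := 0)
        (Order.succ_ne_bot q) (opow_pos L omega0_pos)
      rw [add_zero, log_eq_zero hq1ω, add_zero] at this
      exact this
    rw [Ordinal.CNF.ne_zero hne, hlog, Ordinal.mul_mod, Ordinal.CNF.zero_right]
    simp
  · -- γ < L
    set s := r + omega0 ^ γ with hs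
    have hslt : s < omega0 ^ L :=
      principal_add_omega0_opow L hrlt ((opow_lt_opow_iff_right one_lt_omega0).2 hlt)
    have hβadd : β + omega0 ^ γ = omega0 ^ L * q + s := by rw [← hdm, add_assoc]
    have hs0 : s ≠ 0 := by
      have h1 := opow_pos γ omega0_pos
      rw [hs, ← pos_iff_ne_zero]
      exact h1.trans_le le_add_self
    have hne : β + omega0 ^ γ ≠ 0 := by
      rw [← pos_iff_ne_zero]
      exact (opow_pos γ omega0_pos).trans_le le_add_self
    have hlog : log omega0 (β + omega0 ^ γ) = L := by
      rw [hβadd]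
      have := log_opow_mul_add one_lt_omega0 hq0 hslt
      rwa [log_eq_zero hqω, add_zero] at this
    have hmod : (β + omega0 ^ γ) % omega0 ^ L = s := by
      rw [hβadd, Ordinal.mul_add_mod_self, Ordinal.mod_eq_of_lt hslt]
    unfold CB
    rw [Ordinal.CNF.ne_zero hne, hlog, hmod]
    rw [Ordinal.CNF.ne_zero hs0, List.getLast?_cons_cons, ← Ordinal.CNF.ne_zero hs0]
    have hrβ : r < β := hrlt.trans_le (opow_log_le_self _ hβ0)
    exact IH r hrβ


theorem stmt3 (α : Ordinal) :
    IsWellOrder {β : Ordinal // treeOrd α β} (fun x y => treeOrd x.1 y.1) := by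
  refine { trichotomous := ?_, wf := ?_ }
  swap
  · have key : ∀ a b : {β : Ordinal // treeOrd α β},
        treeOrd a.1 b.1 ∨ a = b ∨ treeOrd b.1 a.1 := by
      rintro ⟨x, a, ha, rfl⟩ ⟨y, b, hb, rfl⟩
      rcases lt_trichotomy a b with hab | hab | hab
      · left
        exact ⟨b, by rw [CB_add_opow]; exact hab, by
          rw [add_assoc, add_omega0_opow ((opow_lt_opow_iff_right one_lt_omega0).2 hab)]⟩
      · right; left
        subst hab; rfl
      · right; right
        exact ⟨a, by rw [CB_add_opow]; exact hab, by
          rw [add_assoc, add_omega0_opow ((opow_lt_opow_iff_right one_lt_omega0).2 hab)]⟩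
    intro a b h1 h2
    rcases key a b with h | h | h
    exacts [absurd h h1, h, absurd h h2]
  · apply Subrelation.wf (r := InvImage (· < ·) (Subtype.val))
    · rintro x y ⟨γ, _, hγ⟩
      have : x.1 < x.1 + omega0 ^ γ := lt_add_of_pos_right _ (opow_pos γ omega0_pos)
      rwa [← hγ] at this
    · exact InvImage.wf _ Ordinal.lt_wf
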